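/- Let D_1, D_2 ⊆ ℝⁿ be finite sets that are strictly linearly separable in the sense that there exist w ∈ ℝⁿ \ {0} and b ∈ ℝ with wᵀx + b > 0 for all x ∈ D_1 and wᵀx + b ≤ 0 for all x ∈ D_2. Then for all integers k_1, k_2 ≥ 1 and m = k_1 + k_2 there exist v_1,…,v_m ∈ ℝⁿ and c_1,…,c_m ∈ ℝ such that: v_jᵀx + c_j > 0 on D_1 and v_jᵀx + c_j ≤ 0 on D_2 for j = 1,…,k_1, while v_jᵀx + c_j ≤ 0 on D_1 and v_jᵀx + c_j > 0 on D_2 for j = k_1+1,…,m. Moreover, if k_1 = n the vectors v_1,…,v_n can be chosen so that the n × n matrix with rows v_1,…,v_n is invertible, so that on D_1 the mapped data (σ(v_1ᵀx + c_1),…,σ(v_mᵀx + c_m)) equals (Ax + c, 0,…,0) for an invertible affine map x ↦ Ax + c; and symmetrically for k_2 = n on D_2. -/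

import Mathlib

open Matrix in
private lemma stmt13_unit (n : ℕ) (w : Fin n → ℝ) (ε : ℝ) (hε : ε ≠ 0)
    (hsw : ε + ∑ i, w i ≠ 0) :
    IsUnit (Matrix.of fun i j : Fin n => w j + if j = i then ε else 0) := by
  have hEq : (Matrix.of fun i j : Fin n => w j + if j = i then ε else 0)
      = ε • (1 + replicateCol Unit (fun _ => ε⁻¹) * replicateRow Unit w) := by
    ext i j
    simp [Matrix.mul_apply, Matrix.one_apply, eq_comm, mul_comm]
    rcases eq_or_ne j i with h | h
    · subst h; simp [hε]; field_simp; ring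
    · simp [h, Ne.symm h, hε]; field_simp
  rw [Matrix.isUnit_iff_isUnit_det, hEq, det_smul, det_one_add_replicateCol_mul_replicateRow]
  simp only [isUnit_iff_ne_zero]
  have hd : (w ⬝ᵥ fun _ => ε⁻¹) = (∑ i, w i) * ε⁻¹ := by
    simp [dotProduct, Finset.sum_mul]
  rw [hd]
  have h2 : 1 + (∑ i, w i) * ε⁻¹ ≠ 0 := by
    field_simp
    intro h
    exact hsw (by simpa [hε] using h)
  positivity

open Matrix in
private lemma stmt13_dot (n : ℕ) (w : Fin n → ℝ) (ε : ℝ) (r : Fin n) (x : Fin n → ℝ) :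
    (fun i => w i + if i = r then ε else 0) ⬝ᵥ x = w ⬝ᵥ x + ε * x r := by
  simp [dotProduct, add_mul, Finset.sum_add_distrib, ite_mul, Finset.sum_ite_eq']

open Matrix in
theorem stmt_13 (n : ℕ) (D₁ D₂ : Set (Fin n → ℝ)) (hfin₁ : D₁.Finite) (hfin₂ : D₂.Finite)
    (hsep : ∃ (w : Fin n → ℝ) (b : ℝ), w ≠ 0 ∧
      (∀ x ∈ D₁, 0 < w ⬝ᵥ x + b) ∧ (∀ x ∈ D₂, w ⬝ᵥ x + b ≤ 0))
    (k₁ k₂ m : ℕ) (hk₁ : 1 ≤ k₁) (hk₂ : 1 ≤ k₂) (hm : m = k₁ + k₂) :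
    ∃ (v : Fin m → Fin n → ℝ) (c : Fin m → ℝ),
      (∀ j : Fin m, (j : ℕ) < k₁ →
        (∀ x ∈ D₁, 0 < v j ⬝ᵥ x + c j) ∧ (∀ x ∈ D₂, v j ⬝ᵥ x + c j ≤ 0)) ∧
      (∀ j : Fin m, k₁ ≤ (j : ℕ) →
        (∀ x ∈ D₁, v j ⬝ᵥ x + c j ≤ 0) ∧ (∀ x ∈ D₂, 0 < v j ⬝ᵥ x + c j)) ∧
      (∀ h₁ : k₁ = n, ∃ (A : Matrix (Fin n) (Fin n) ℝ) (c' : Fin n → ℝ), IsUnit A ∧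
        (∀ (i : Fin n) (j : Fin n), A i j = v ⟨(i : ℕ), by omega⟩ j) ∧
        ∀ x ∈ D₁, ∀ j : Fin m,
          max 0 (v j ⬝ᵥ x + c j) =
            if h : (j : ℕ) < n then (A.mulVec x + c') ⟨(j : ℕ), h⟩ else 0) ∧
      (∀ h₂ : k₂ = n, ∃ (A : Matrix (Fin n) (Fin n) ℝ) (c' : Fin n → ℝ), IsUnit A ∧
        (∀ (i : Fin n) (j : Fin n), A i j = v ⟨k₁ + (i : ℕ), by omega⟩ j) ∧
        ∀ x ∈ D₂, ∀ j : Fin m,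
          max 0 (v j ⬝ᵥ x + c j) =
            if h : k₁ ≤ (j : ℕ) then
              (A.mulVec x + c') ⟨(j : ℕ) - k₁, by have := j.isLt; omega⟩
            else 0) := by
  obtain ⟨w, b, hw, h1, h2⟩ := hsep
  have hn : 0 < n := by
    rcases Nat.eq_zero_or_pos n with h | h
    · subst h; exact absurd (Subsingleton.elim w 0) hw
    · exact h
  -- bound on coordinates
  obtain ⟨M, hM1, hM⟩ : ∃ M : ℝ, 1 ≤ M ∧ ∀ x ∈ D₁ ∪ D₂, ∀ i, |x i| ≤ M := by
    obtain ⟨M₀, hM₀⟩ := ((hfin₁.union hfin₂).image fun x => ‖x‖).bddAbove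
    refine ⟨max M₀ 1, le_max_right _ _, fun x hx i => ?_⟩
    have h1 : ‖x‖ ≤ M₀ := hM₀ (Set.mem_image_of_mem _ hx)
    have h2 : |x i| ≤ ‖x‖ := by
      simpa using norm_le_pi_norm x i
    exact h2.trans (h1.trans (le_max_left _ _))
  have hM0 : 0 < M := lt_of_lt_of_le one_pos hM1
  -- margin on D₁
  obtain ⟨η, hη, hη1⟩ : ∃ η : ℝ, 0 < η ∧ ∀ x ∈ D₁, 2 * η ≤ w ⬝ᵥ x + b := by
    rcases D₁.eq_empty_or_nonempty with h | h
    · exact ⟨1, one_pos, by simp [h]⟩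
    · obtain ⟨x₀, hx₀, hmin⟩ := Set.exists_min_image D₁ (fun x => w ⬝ᵥ x + b) hfin₁ h
      have := h1 x₀ hx₀
      exact ⟨(w ⬝ᵥ x₀ + b) / 2, by linarith, fun x hx => by
        have := hmin x hx; linarith⟩
  -- choose ε
  obtain ⟨ε, hε0, hεM, hεsw⟩ :
      ∃ ε : ℝ, 0 < ε ∧ ε * M ≤ η / 2 ∧ ε + ∑ i, w i ≠ 0 := by
    set ε₀ := η / (2 * M) with hε₀def
    have hε₀ : 0 < ε₀ := by positivity
    have hkey : ∀ ε : ℝ, 0 < ε → ε ≤ ε₀ → ε * M ≤ η / 2 := by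
      intro ε hp hle
      have : ε₀ * M = η / 2 := by rw [hε₀def]; field_simp
      nlinarith
    by_cases hc : ε₀ / 2 + ∑ i, w i = 0
    · refine ⟨ε₀ / 4, by positivity, hkey _ (by positivity) (by linarith), ?_⟩
      intro h; nlinarith
    · exact ⟨ε₀ / 2, by positivity, hkey _ (by positivity) (by linarith), hc⟩
  have hε : ε ≠ 0 := ne_of_gt hε0
  -- the construction
  set r₁ : Fin m → Fin n := fun j => ⟨(j : ℕ) % n, Nat.mod_lt _ hn⟩ with hr₁def
  set r₂ : Fin m → Fin n := fun j => ⟨((j : ℕ) - k₁) % n, Nat.mod_lt _ hn⟩ with hr₂def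
  set v : Fin m → Fin n → ℝ := fun j =>
    if (j : ℕ) < k₁ then (fun i => w i + if i = r₁ j then ε else 0)
    else -(fun i => w i + if i = r₂ j then ε else 0) with hvdef
  set c : Fin m → ℝ := fun j => if (j : ℕ) < k₁ then b - η else η - b with hcdef
  have hdot1 : ∀ j : Fin m, (j : ℕ) < k₁ → ∀ x : Fin n → ℝ,
      v j ⬝ᵥ x + c j = (w ⬝ᵥ x + b) + (ε * x (r₁ j) - η) := by
    intro j hj x
    simp only [hvdef, hcdef, if_pos hj, stmt13_dot]
    ring
  have hdot2 : ∀ j : Fin m, k₁ ≤ (j : ℕ) → ∀ x : Fin n → ℝ,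
      v j ⬝ᵥ x + c j = -(w ⬝ᵥ x + b) + (η - ε * x (r₂ j)) := by
    intro j hj x
    simp only [hvdef, hcdef, if_neg (Nat.not_lt.mpr hj), neg_dotProduct, stmt13_dot]
    ring
  have hbx : ∀ x ∈ D₁ ∪ D₂, ∀ r : Fin n, |ε * x r| ≤ η / 2 := by
    intro x hx r
    have h1 : |ε * x r| = ε * |x r| := by rw [abs_mul, abs_of_pos hε0]
    have h2 : ε * |x r| ≤ ε * M := mul_le_mul_of_nonneg_left (hM x hx r) hε0.le
    linarith
  have hP1 : ∀ j : Fin m, (j : ℕ) < k₁ → ∀ x ∈ D₁, 0 < v j ⬝ᵥ x + c j := by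
    intro j hj x hx
    rw [hdot1 j hj x]
    have := hη1 x hx
    have := abs_le.mp (hbx x (Or.inl hx) (r₁ j))
    linarith [this.1]
  have hN2 : ∀ j : Fin m, (j : ℕ) < k₁ → ∀ x ∈ D₂, v j ⬝ᵥ x + c j ≤ 0 := by
    intro j hj x hx
    rw [hdot1 j hj x]
    have := h2 x hx
    have := abs_le.mp (hbx x (Or.inr hx) (r₁ j))
    linarith [this.2]
  have hN1 : ∀ j : Fin m, k₁ ≤ (j : ℕ) → ∀ x ∈ D₁, v j ⬝ᵥ x + c j ≤ 0 := by
    intro j hj x hx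
    rw [hdot2 j hj x]
    have := hη1 x hx
    have := abs_le.mp (hbx x (Or.inl hx) (r₂ j))
    linarith [this.1]
  have hP2 : ∀ j : Fin m, k₁ ≤ (j : ℕ) → ∀ x ∈ D₂, 0 < v j ⬝ᵥ x + c j := by
    intro j hj x hx
    rw [hdot2 j hj x]
    have := h2 x hx
    have := abs_le.mp (hbx x (Or.inr hx) (r₂ j))
    linarith [this.2]
  refine ⟨v, c, fun j hj => ⟨hP1 j hj, hN2 j hj⟩, fun j hj => ⟨hN1 j hj, hP2 j hj⟩, ?_, ?_⟩
  · -- k₁ = n case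
    intro h₁
    refine ⟨Matrix.of fun i j : Fin n => w j + if j = i then ε else 0,
      fun _ => b - η, stmt13_unit n w ε hε hεsw, ?_, ?_⟩
    · intro i j
      have hi : ((⟨(i : ℕ), by omega⟩ : Fin m) : ℕ) < k₁ := by
        simp; omega
      have hr : r₁ ⟨(i : ℕ), by omega⟩ = i := by
        simp [hr₁def, Fin.ext_iff, Nat.mod_eq_of_lt i.isLt]
      simp only [hvdef, if_pos hi, hr, Matrix.of_apply]
    · intro x hx j
      by_cases hj : (j : ℕ) < n
      · rw [dif_pos hj]
        have hjk : (j : ℕ) < k₁ := by omega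
        have hpos := hP1 j hjk x hx
        rw [max_eq_right hpos.le]
        have hr : r₁ j = ⟨(j : ℕ), hj⟩ := by
          simp [hr₁def, Fin.ext_iff, Nat.mod_eq_of_lt hj]
        rw [hdot1 j hjk x]
        simp only [Matrix.mulVec, Pi.add_apply, Matrix.of_apply]
        rw [hr, stmt13_dot]
        ring
      · rw [dif_neg hj]
        have hjk : k₁ ≤ (j : ℕ) := by omega
        exact max_eq_left (hN1 j hjk x hx)
  · -- k₂ = n case
    intro h₂
    have hunit := stmt13_unit n w ε hε hεsw
    refine ⟨-(Matrix.of fun i j : Fin n => w j + if j = i then ε else 0),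
      fun _ => η - b, hunit.neg, ?_, ?_⟩
    · intro i j
      have hi : k₁ ≤ ((⟨k₁ + (i : ℕ), by omega⟩ : Fin m) : ℕ) := by simp
      have hr : r₂ ⟨k₁ + (i : ℕ), by omega⟩ = i := by
        simp [hr₂def, Fin.ext_iff, Nat.mod_eq_of_lt i.isLt]
      simp only [hvdef, if_neg (Nat.not_lt.mpr hi), hr, Matrix.neg_apply, Matrix.of_apply,
        Pi.neg_apply]
    · intro x hx j
      by_cases hj : k₁ ≤ (j : ℕ)
      · rw [dif_pos hj]
        have hpos := hP2 j hj x hx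
        rw [max_eq_right hpos.le]
        have hjn : (j : ℕ) - k₁ < n := by have := j.isLt; omega
        have hr : r₂ j = ⟨(j : ℕ) - k₁, hjn⟩ := by
          simp [hr₂def, Fin.ext_iff, Nat.mod_eq_of_lt hjn]
        rw [hdot2 j hj x]
        simp only [Matrix.mulVec, Pi.add_apply, Matrix.neg_apply, Matrix.of_apply,
          neg_dotProduct]
        rw [hr]
        have hneg : (fun i => -(w i + if i = (⟨(j : ℕ) - k₁, hjn⟩ : Fin n) then ε else 0)) ⬝ᵥ x
            = -(w ⬝ᵥ x + ε * x ⟨(j : ℕ) - k₁, hjn⟩) := by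
          rw [← stmt13_dot n w ε ⟨(j : ℕ) - k₁, hjn⟩ x]
          simp only [dotProduct, ← Finset.sum_neg_distrib]
          exact Finset.sum_congr rfl fun i _ => by ring
        rw [hneg]
        ring
      · rw [dif_neg hj]
        have hjk : (j : ℕ) < k₁ := by omega
        exact max_eq_left (hN2 j hjk x hx)
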